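/- Let M ∈ ℕ, let M_v and M_p be symmetric real M × M matrices, let R be a real M × M matrix, and let v, p : ℝ → ℝᴹ be differentiable functions with derivatives v'(t) and p'(t) satisfying, for all t, the semi-discrete system M_v · v'(t) = R · p(t) and M_p · p'(t) = − Rᵀ · v(t). Then the discrete energy t ↦ v(t)ᵀ M_v v(t) + p(t)ᵀ M_p p(t) is constant in t. -/

import Mathlib

open Matrix

lemma quad_deriv {M : ℕ} (A : Matrix (Fin M) (Fin M) ℝ)
    (u u' : ℝ → Fin M → ℝ) (hu : ∀ t : ℝ, HasDerivAt u (u' t) t) (t : ℝ) :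
    HasDerivAt (fun s => u s ⬝ᵥ A.mulVec (u s))
      (u' t ⬝ᵥ A.mulVec (u t) + u t ⬝ᵥ A.mulVec (u' t)) t := by
  have hc : ∀ i : Fin M, ∀ s : ℝ, HasDerivAt (fun r => u r i) (u' s i) s := by
    intro i s
    exact (hasDerivAt_pi.mp (hu s)) i
  simp only [dotProduct, mulVec]
  have : ∀ i : Fin M, HasDerivAt
      (fun s => u s i * ∑ j, A i j * u s j)
      (u' t i * ∑ j, A i j * u t j + u t i * ∑ j, A i j * u' t j) t := by
    intro i
    exact (hc i t).mul (HasDerivAt.fun_sum fun j _ => (hc j t).const_mul (A i j))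
  have hsum := HasDerivAt.fun_sum (fun i (_ : i ∈ Finset.univ) => this i)
  simpa [Finset.sum_add_distrib] using hsum

/-- Energy conservation for the source-free semi-discrete matrix system
`M_v v' = R p`, `M_p p' = −Rᵀ v` with symmetric mass matrices: the discrete
energy `vᵀ M_v v + pᵀ M_p p` is constant in time. -/
theorem stmt_9
    (M : ℕ) (Mv Mp R : Matrix (Fin M) (Fin M) ℝ)
    (hMv : Mv.IsSymm) (hMp : Mp.IsSymm)
    (v p v' p' : ℝ → Fin M → ℝ)
    (hv : ∀ t : ℝ, HasDerivAt v (v' t) t)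
    (hp : ∀ t : ℝ, HasDerivAt p (p' t) t)
    (h1 : ∀ t : ℝ, Mv.mulVec (v' t) = R.mulVec (p t))
    (h2 : ∀ t : ℝ, Mp.mulVec (p' t) = -(Rᵀ.mulVec (v t))) :
    ∀ s t : ℝ,
      v s ⬝ᵥ Mv.mulVec (v s) + p s ⬝ᵥ Mp.mulVec (p s)
        = v t ⬝ᵥ Mv.mulVec (v t) + p t ⬝ᵥ Mp.mulVec (p t) := by
  set E : ℝ → ℝ := fun t => v t ⬝ᵥ Mv.mulVec (v t) + p t ⬝ᵥ Mp.mulVec (p t) with hE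
  have hderiv : ∀ t : ℝ, HasDerivAt E 0 t := by
    intro t
    have hEv := quad_deriv Mv v v' hv t
    have hEp := quad_deriv Mp p p' hp t
    have h := hEv.add hEp
    have key : (v' t ⬝ᵥ Mv.mulVec (v t) + v t ⬝ᵥ Mv.mulVec (v' t))
        + (p' t ⬝ᵥ Mp.mulVec (p t) + p t ⬝ᵥ Mp.mulVec (p' t)) = 0 := by
      have e1 : v' t ⬝ᵥ Mv.mulVec (v t) = Mv.mulVec (v' t) ⬝ᵥ v t := by
        rw [dotProduct_mulVec, ← Matrix.mulVec_transpose, hMv]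
      have e2 : p' t ⬝ᵥ Mp.mulVec (p t) = Mp.mulVec (p' t) ⬝ᵥ p t := by
        rw [dotProduct_mulVec, ← Matrix.mulVec_transpose, hMp]
      have e3 : v t ⬝ᵥ R.mulVec (p t) = Rᵀ.mulVec (v t) ⬝ᵥ p t := by
        rw [dotProduct_mulVec, Matrix.mulVec_transpose]
      rw [e1, e2, h1 t, h2 t, dotProduct_comm (R.mulVec (p t)) (v t), e3,
        dotProduct_comm (p t) (-(Rᵀ.mulVec (v t)))]
      simp [neg_dotProduct]
    rw [key] at h
    exact h
  exact fun s t =>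
    is_const_of_deriv_eq_zero (fun x => (hderiv x).differentiableAt)
      (fun x => (hderiv x).deriv) s t
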